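/- arXiv:1907.08814 — 2 statements merged into one kernel-verified Lean document; each statement's English description precedes it below -/
import Mathlib

section
/- Let 1 < p < 2 and c ≥ d be real numbers. With signed powers a^r := |a|^{r-1}a, one has c - d ≤ (1/(p-1)) · (c² + d²)^{(2-p)/2} · (c^{p-1} - d^{p-1}). -/
open Real

/-- Signed power: `a^r := |a|^(r-1) * a`. -/
noncomputable def spow (a r : ℝ) : ℝ := |a| ^ (r - 1) * a

lemma spow_of_nonneg {a r : ℝ} (hr : r ≠ 0) (ha : 0 ≤ a) : spow a r = a ^ r := by
  unfold spow
  rcases eq_or_lt_of_le ha with h | h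
  · rw [← h]; simp [Real.zero_rpow hr]
  · rw [abs_of_pos h, ← Real.rpow_add_one (ne_of_gt h)]
    ring_nf

lemma spow_neg (a r : ℝ) : spow (-a) r = -spow a r := by
  unfold spow; rw [abs_neg]; ring

/-- Core AM-GM lemma for nonneg reals. -/
lemma core {p c d : ℝ} (hp1 : 1 < p) (hp2 : p < 2) (h0 : 0 ≤ d) (hdc : d ≤ c) :
    (p - 1) * (c - d) ≤ c ^ (2 - p) * (c ^ (p - 1) - d ^ (p - 1)) := by
  have hc : 0 ≤ c := le_trans h0 hdc
  rcases eq_or_lt_of_le hc with h | hcpos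
  · have hd0 : d = 0 := le_antisymm (h ▸ hdc) h0
    subst hd0; rw [← h]; norm_num
  have amgm : c ^ (2 - p) * d ^ (p - 1) ≤ (2 - p) * c + (p - 1) * d :=
    Real.geom_mean_le_arith_mean2_weighted (by linarith) (by linarith) hc h0 (by ring)
  have key : c ^ (2 - p) * c ^ (p - 1) = c := by
    rw [← Real.rpow_add hcpos]
    norm_num
  nlinarith [amgm, key]

lemma rpow_sq_le {a : ℝ} (ha : 0 ≤ a) {s e : ℝ} (h : a ^ 2 ≤ s) (he : e ≤ 2) :
    a ^ (2 - e) ≤ s ^ ((2 - e) / 2) := by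
  have h1 : a ^ (2 - e) = (a ^ 2) ^ ((2 - e) / 2) := by
    rw [show (2 - e) = 2 * ((2 - e) / 2) by ring, Real.rpow_mul ha]
    norm_num
  rw [h1]
  exact Real.rpow_le_rpow (by positivity) h (by linarith)

lemma final_step {p K X c d : ℝ} (hp : 0 < p - 1) (h : (p - 1) * (c - d) ≤ K * X) :
    c - d ≤ (1 / (p - 1)) * K * X := by
  rw [div_mul_eq_mul_div, div_mul_eq_mul_div, le_div_iff₀ hp]
  nlinarith

theorem stmt2 (p c d : ℝ) (hp1 : 1 < p) (hp2 : p < 2) (hcd : d ≤ c) :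
    c - d ≤ (1 / (p - 1)) * (c ^ 2 + d ^ 2) ^ ((2 - p) / 2) *
      (spow c (p - 1) - spow d (p - 1)) := by
  have hp : 0 < p - 1 := by linarith
  have hr : p - 1 ≠ 0 := ne_of_gt hp
  set K := (c ^ 2 + d ^ 2) ^ ((2 - p) / 2) with hKdef
  rcases le_or_gt 0 d with hd | hd
  · -- 0 ≤ d ≤ c
    have hc : 0 ≤ c := le_trans hd hcd
    rw [spow_of_nonneg hr hc, spow_of_nonneg hr hd]
    apply final_step hp
    have h2 : c ^ (2 - p) ≤ K := rpow_sq_le hc (by nlinarith) (le_of_lt hp2)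
    have h3 : (0:ℝ) ≤ c ^ (p - 1) - d ^ (p - 1) :=
      sub_nonneg.2 (Real.rpow_le_rpow hd hcd (by linarith))
    calc (p - 1) * (c - d) ≤ c ^ (2 - p) * (c ^ (p - 1) - d ^ (p - 1)) :=
          core hp1 hp2 hd hcd
      _ ≤ K * (c ^ (p - 1) - d ^ (p - 1)) := mul_le_mul_of_nonneg_right h2 h3
  rcases le_or_gt c 0 with hc | hc
  · -- d ≤ c ≤ 0
    have h0 : (0:ℝ) ≤ -c := by linarith
    have h0' : -c ≤ -d := by linarith
    have e1 : spow c (p - 1) = -((-c) ^ (p - 1)) := by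
      have h := spow_neg (-c) (p - 1)
      rw [neg_neg] at h
      rw [h, spow_of_nonneg hr h0]
    have e2 : spow d (p - 1) = -((-d) ^ (p - 1)) := by
      have h := spow_neg (-d) (p - 1)
      rw [neg_neg] at h
      rw [h, spow_of_nonneg hr (le_trans h0 h0')]
    rw [e1, e2]
    apply final_step hp
    have h2 : (-d) ^ (2 - p) ≤ K := rpow_sq_le (le_trans h0 h0') (by nlinarith) (le_of_lt hp2)
    have h3 : (0:ℝ) ≤ (-d) ^ (p - 1) - (-c) ^ (p - 1) :=
      sub_nonneg.2 (Real.rpow_le_rpow h0 h0' (by linarith))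
    have hcore := core hp1 hp2 h0 h0'
    calc (p - 1) * (c - d) = (p - 1) * ((-d) - (-c)) := by ring
      _ ≤ (-d) ^ (2 - p) * ((-d) ^ (p - 1) - (-c) ^ (p - 1)) := hcore
      _ ≤ K * ((-d) ^ (p - 1) - (-c) ^ (p - 1)) := mul_le_mul_of_nonneg_right h2 h3
      _ = K * (-((-c) ^ (p - 1)) - -((-d) ^ (p - 1))) := by ring
  · -- d < 0 < c
    have hc' : (0:ℝ) ≤ c := le_of_lt hc
    have hd' : (0:ℝ) ≤ -d := by linarith
    have e2 : spow d (p - 1) = -((-d) ^ (p - 1)) := by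
      have h := spow_neg (-d) (p - 1)
      rw [neg_neg] at h
      rw [h, spow_of_nonneg hr hd']
    rw [spow_of_nonneg hr hc', e2]
    apply final_step hp
    have hKc : c ^ (2 - p) ≤ K := rpow_sq_le hc' (by nlinarith) (le_of_lt hp2)
    have hKd : (-d) ^ (2 - p) ≤ K := rpow_sq_le hd' (by nlinarith) (le_of_lt hp2)
    have z : (0:ℝ) ^ (p - 1) = 0 := Real.zero_rpow hr
    have h1 := core hp1 hp2 (le_refl 0) hc'
    have h2 := core hp1 hp2 (le_refl 0) hd'
    rw [z] at h1 h2
    have n1 : (0:ℝ) ≤ c ^ (p - 1) := Real.rpow_nonneg hc' _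
    have n2 : (0:ℝ) ≤ (-d) ^ (p - 1) := Real.rpow_nonneg hd' _
    have b1 : (p - 1) * c ≤ K * c ^ (p - 1) := by
      calc (p - 1) * c = (p - 1) * (c - 0) := by ring
        _ ≤ c ^ (2 - p) * (c ^ (p - 1) - 0) := h1
        _ ≤ K * (c ^ (p - 1)) := by
            rw [sub_zero]; exact mul_le_mul_of_nonneg_right hKc n1
    have b2 : (p - 1) * (-d) ≤ K * (-d) ^ (p - 1) := by
      calc (p - 1) * (-d) = (p - 1) * ((-d) - 0) := by ring
        _ ≤ (-d) ^ (2 - p) * ((-d) ^ (p - 1) - 0) := h2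
        _ ≤ K * ((-d) ^ (p - 1)) := by
            rw [sub_zero]; exact mul_le_mul_of_nonneg_right hKd n2
    nlinarith [b1, b2]
end

section
/- Let p ≥ 2, q ≥ 1, and a ≥ b be real numbers. With signed powers a^r := |a|^{r-1}a, one has (a^{(p+q-1)/p} - b^{(p+q-1)/p})^p ≤ ((p+q-1)^p / (p^p q)) · (a - b)^{p-1} · (a^q - b^q). -/
open Real

lemma hasDerivAt_spow {r : ℝ} (hr : 1 ≤ r) (t : ℝ) :
    HasDerivAt (fun x => spow x r) (r * |t| ^ (r - 1)) t := by
  rcases eq_or_lt_of_le hr with rfl | hr1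
  · simpa [spow, Real.rpow_zero] using hasDerivAt_id' t
  rcases lt_trichotomy t 0 with ht | rfl | ht
  · -- t < 0 : spow x r = -((-x) ^ r) near t
    have h1 : HasDerivAt (fun y : ℝ => y ^ r) (r * (-t) ^ (r - 1)) (-t) :=
      Real.hasDerivAt_rpow_const (Or.inl (by linarith))
    have h2 : HasDerivAt (fun x : ℝ => (-x) ^ r) (r * (-t) ^ (r - 1) * (-1)) t :=
      h1.comp t (hasDerivAt_neg t)
    have h3 : HasDerivAt (fun x : ℝ => -((-x) ^ r)) (r * (-t) ^ (r - 1)) t := by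
      have := h2.neg; simp only [mul_neg, mul_one, neg_neg] at this; exact this
    have heq : (fun x : ℝ => -((-x) ^ r)) =ᶠ[nhds t] fun x => spow x r := by
      filter_upwards [Iio_mem_nhds ht] with x hx
      have hx0 : x < 0 := hx
      have hxr : (-x) ^ (r - 1) * (-x) = (-x) ^ r := by
        rw [← Real.rpow_add_one (ne_of_gt (by linarith : (0:ℝ) < -x)) (r - 1)]
        norm_num
      simp only [spow, abs_of_neg hx0, ← hxr]
      ring
    have := h3.congr_of_eventuallyEq heq.symm
    simpa [abs_of_neg ht] using this
  · -- t = 0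
    rw [hasDerivAt_iff_tendsto_slope]
    have hcont : ContinuousAt (fun x : ℝ => |x| ^ (r - 1)) 0 :=
      (Real.continuousAt_rpow_const (|(0:ℝ)|) (r - 1) (Or.inr (by linarith))).comp
        continuous_abs.continuousAt
    have hval : |(0 : ℝ)| ^ (r - 1) = 0 := by
      rw [abs_zero, Real.zero_rpow (by linarith)]
    have htend0 : Filter.Tendsto (fun x : ℝ => |x| ^ (r - 1)) (nhds 0) (nhds 0) := by
      simpa [abs_zero, Real.zero_rpow (show r - 1 ≠ 0 by linarith)] using hcont.tendsto
    have htend : Filter.Tendsto (fun x : ℝ => |x| ^ (r - 1)) (nhdsWithin 0 {(0:ℝ)}ᶜ)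
        (nhds (r * |(0:ℝ)| ^ (r - 1))) := by
      rw [hval, mul_zero]
      exact htend0.mono_left nhdsWithin_le_nhds
    refine htend.congr' ?_
    filter_upwards [self_mem_nhdsWithin] with x hx
    have hx0 : x ≠ 0 := hx
    simp only [slope_def_field, spow, abs_zero,
      Real.zero_rpow (show r - 1 ≠ 0 by linarith), zero_mul, mul_zero, sub_zero]
    field_simp
  · -- t > 0 : spow x r = x ^ r near t
    have h1 : HasDerivAt (fun y : ℝ => y ^ r) (r * t ^ (r - 1)) t :=
      Real.hasDerivAt_rpow_const (Or.inl (by linarith))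
    have heq : (fun y : ℝ => y ^ r) =ᶠ[nhds t] fun x => spow x r := by
      filter_upwards [Ioi_mem_nhds ht] with x hx
      have hx0 : (0:ℝ) < x := hx
      have hxr : x ^ (r - 1) * x = x ^ r := by
        rw [← Real.rpow_add_one (ne_of_gt hx0) (r - 1)]
        norm_num
      simp [spow, abs_of_pos hx0, ← hxr]
    have := h1.congr_of_eventuallyEq heq.symm
    simpa [abs_of_pos ht] using this

lemma integral_spow {r : ℝ} (hr : 1 ≤ r) (b a : ℝ) :
    ∫ t in b..a, r * |t| ^ (r - 1) = spow a r - spow b r := by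
  refine intervalIntegral.integral_eq_sub_of_hasDerivAt
    (fun t _ => hasDerivAt_spow hr t) ?_
  exact (continuous_const.mul
    (continuous_abs.rpow_const fun x => Or.inr (by linarith))).intervalIntegrable _ _

theorem stmt5 (p q a b : ℝ) (hp : 2 ≤ p) (hq : 1 ≤ q) (hab : b ≤ a) :
    (spow a ((p + q - 1) / p) - spow b ((p + q - 1) / p)) ^ p ≤
      ((p + q - 1) ^ p / (p ^ p * q)) * (a - b) ^ (p - 1) * (spow a q - spow b q) := by
  have hp1 : 1 < p := by linarith
  have hp0 : 0 < p := by linarith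
  have hq0 : 0 < q := by linarith
  set s : ℝ := (p + q - 1) / p with hs_def
  have hs : 1 ≤ s := by
    rw [hs_def, le_div_iff₀ hp0]; linarith
  have hs0 : 0 < s := by linarith
  have hsp : (s - 1) * p = q - 1 := by
    rw [hs_def, sub_mul, div_mul_cancel₀ _ hp0.ne']
    ring
  set f : ℝ → ℝ := fun t => s * |t| ^ (s - 1) with hf_def
  have hf_nonneg : ∀ t, 0 ≤ f t := fun t =>
    mul_nonneg hs0.le (Real.rpow_nonneg (abs_nonneg t) _)
  set μ := MeasureTheory.volume.restrict (Set.Ioc b a) with hμ_def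
  haveI : MeasureTheory.IsFiniteMeasure μ := by
    constructor
    rw [hμ_def, MeasureTheory.Measure.restrict_apply_univ]
    exact measure_Ioc_lt_top
  have hconj : p.HolderConjugate (p / (p - 1)) := Real.HolderConjugate.conjExponent hp1
  have hf_cont : Continuous f :=
    continuous_const.mul (continuous_abs.rpow_const fun x => Or.inr (by linarith))
  have hf_mem : MeasureTheory.MemLp f (ENNReal.ofReal p) μ := by
    refine MeasureTheory.MemLp.of_bound hf_cont.aestronglyMeasurable
      (s * (max |a| |b|) ^ (s - 1)) ?_
    refine (MeasureTheory.ae_restrict_iff' measurableSet_Ioc).mpr ?_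
    filter_upwards with x hx
    have hxb : |x| ≤ max |a| |b| := by
      refine abs_le.mpr ⟨?_, le_trans hx.2 (le_trans (le_abs_self a) (le_max_left _ _))⟩
      have h1 : -|b| ≤ b := neg_abs_le b
      have h2 : |b| ≤ max |a| |b| := le_max_right _ _
      linarith [hx.1]
    rw [Real.norm_of_nonneg (hf_nonneg x)]
    exact mul_le_mul_of_nonneg_left
      (Real.rpow_le_rpow (abs_nonneg x) hxb (by linarith)) hs0.le
  have hg_mem : MeasureTheory.MemLp (fun _ : ℝ => (1:ℝ)) (ENNReal.ofReal (p / (p-1))) μ :=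
    MeasureTheory.memLp_const 1
  have key := MeasureTheory.integral_mul_le_Lp_mul_Lq_of_nonneg (μ := μ) hconj
    (f := f) (g := fun _ => 1)
    (Filter.Eventually.of_forall fun x => hf_nonneg x)
    (Filter.Eventually.of_forall fun _ => zero_le_one) hf_mem hg_mem
  simp only [mul_one, Real.one_rpow] at key
  -- compute the integrals
  have hμuniv : ∫ _x, (1:ℝ) ∂μ = a - b := by
    rw [MeasureTheory.integral_const, smul_eq_mul, mul_one, hμ_def,
      MeasureTheory.measureReal_def, MeasureTheory.Measure.restrict_apply_univ, Real.volume_Ioc,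
      ENNReal.toReal_ofReal (by linarith)]
  have hIf : ∫ x, f x ∂μ = spow a s - spow b s := by
    rw [hμ_def, ← intervalIntegral.integral_of_le hab]
    exact integral_spow hs b a
  have hIq : ∫ x, f x ^ p ∂μ = s ^ p * ((spow a q - spow b q) / q) := by
    have hpt : ∀ x : ℝ, f x ^ p = s ^ p * |x| ^ (q - 1) := by
      intro x
      rw [hf_def]
      rw [Real.mul_rpow hs0.le (Real.rpow_nonneg (abs_nonneg x) _),
        ← Real.rpow_mul (abs_nonneg x), hsp]
    have habs : ∫ x, |x| ^ (q - 1) ∂μ = (spow a q - spow b q) / q := by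
      have h1 : ∫ t in b..a, q * |t| ^ (q - 1) = spow a q - spow b q := integral_spow hq b a
      rw [intervalIntegral.integral_const_mul, intervalIntegral.integral_of_le hab] at h1
      rw [hμ_def, eq_div_iff hq0.ne', mul_comm, ← h1]
    calc ∫ x, f x ^ p ∂μ = ∫ x, s ^ p * |x| ^ (q - 1) ∂μ := by
          exact MeasureTheory.integral_congr_ae (Filter.Eventually.of_forall hpt)
      _ = s ^ p * ∫ x, |x| ^ (q - 1) ∂μ := MeasureTheory.integral_const_mul _ _
      _ = s ^ p * ((spow a q - spow b q) / q) := by rw [habs]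
  rw [hμuniv, hIf, hIq] at key
  have hX : 0 ≤ s ^ p * ((spow a q - spow b q) / q) := by
    rw [← hIq]
    exact MeasureTheory.integral_nonneg fun x => Real.rpow_nonneg (hf_nonneg x) p
  have hbase : 0 ≤ spow a s - spow b s := by
    rw [← hIf]
    exact MeasureTheory.integral_nonneg fun x => hf_nonneg x
  have hab0 : (0:ℝ) ≤ a - b := by linarith
  have key2 := Real.rpow_le_rpow hbase key hp0.le
  rw [Real.mul_rpow (Real.rpow_nonneg hX _) (Real.rpow_nonneg hab0 _),
    ← Real.rpow_mul hX, one_div_mul_cancel hp0.ne', Real.rpow_one,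
    ← Real.rpow_mul hab0,
    show 1 / (p / (p - 1)) * p = p - 1 by field_simp] at key2
  refine le_trans key2 (le_of_eq ?_)
  have hsP : s ^ p = (p + q - 1) ^ p / p ^ p := by
    rw [hs_def]
    exact Real.div_rpow (by linarith) hp0.le p
  rw [hsP]
  have hpP : (0:ℝ) < p ^ p := Real.rpow_pos_of_pos hp0 p
  field_simp
end
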